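/- Let n ≥ 3 and let G be a non-crossing finite simple graph on the vertex set ZMod n (n points in cyclic order on a circle). Then G has at most n − 2 triangles. -/

import Mathlib

/-- `x` lies strictly between `a` and `b` on the cycle `ZMod n` (traversing from
`a` in the positive direction, `x` is met strictly before `b`). -/
def StrictBetween {n : ℕ} (a b x : ZMod n) : Prop :=
  0 < (x - a).val ∧ (x - a).val < (b - a).val

/-- A graph on `ZMod n` (viewed as `n` points in cyclic order on a circle) is
non-crossing if no two vertex-disjoint edges `{a,b}`, `{c,d}` cross, i.e. for
no two such edges exactly one of `c, d` lies strictly between `a` and `b`. -/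
def NonCrossing {n : ℕ} (G : SimpleGraph (ZMod n)) : Prop :=
  ∀ a b c d : ZMod n, G.Adj a b → G.Adj c d →
    a ≠ c → a ≠ d → b ≠ c → b ≠ d →
    (StrictBetween a b c ↔ StrictBetween a b d)

lemma sb_of {n : ℕ} [NeZero n] {a b x : ZMod n} (h1 : a.val < x.val)
    (h2 : x.val < b.val) : StrictBetween a b x := by
  unfold StrictBetween
  rw [ZMod.val_sub h1.le, ZMod.val_sub (h1.trans h2).le]
  omega

lemma not_sb_of {n : ℕ} [NeZero n] {a b x : ZMod n} (h1 : a.val < b.val)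
    (h2 : b.val ≤ x.val) : ¬ StrictBetween a b x := by
  unfold StrictBetween
  rw [ZMod.val_sub (h1.le.trans h2), ZMod.val_sub h1.le]
  omega

lemma triangle_decomp {n : ℕ} [NeZero n] {G : SimpleGraph (ZMod n)}
    [DecidableRel G.Adj] {t : Finset (ZMod n)} (ht : t ∈ G.cliqueFinset 3) :
    ∃ a b c : ZMod n, a.val < b.val ∧ b.val < c.val ∧ t = {a, b, c} ∧
      G.Adj a b ∧ G.Adj a c ∧ G.Adj b c := by
  rw [SimpleGraph.mem_cliqueFinset_iff] at ht
  obtain ⟨hcl, hcard⟩ := ht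
  obtain ⟨x, y, z, hxy, hxz, hyz, rfl⟩ := Finset.card_eq_three.mp hcard
  have hx : x ∈ ({x, y, z} : Finset (ZMod n)) := by simp
  have hy : y ∈ ({x, y, z} : Finset (ZMod n)) := by simp
  have hz : z ∈ ({x, y, z} : Finset (ZMod n)) := by simp
  have axy := hcl hx hy hxy
  have axz := hcl hx hz hxz
  have ayz := hcl hy hz hyz
  have vxy : x.val ≠ y.val := fun h => hxy (ZMod.val_injective n h)
  have vxz : x.val ≠ z.val := fun h => hxz (ZMod.val_injective n h)
  have vyz : y.val ≠ z.val := fun h => hyz (ZMod.val_injective n h)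
  have perm : ∀ a b c : ZMod n, ({a, b, c} : Finset (ZMod n)) = {b, a, c} ∧
      ({a, b, c} : Finset (ZMod n)) = {a, c, b} := by
    intro a b c
    constructor <;> · ext w; simp; tauto
  rcases lt_trichotomy x.val y.val with h1 | h1 | h1
  · rcases lt_trichotomy y.val z.val with h2 | h2 | h2
    · exact ⟨x, y, z, h1, h2, rfl, axy, axz, ayz⟩
    · omega
    · rcases lt_trichotomy x.val z.val with h3 | h3 | h3
      · exact ⟨x, z, y, h3, h2, by ext w; simp; tauto, axz, axy, ayz.symm⟩
      · omega
      · exact ⟨z, x, y, h3, h1, by ext w; simp; tauto, axz.symm, ayz.symm, axy⟩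
  · omega
  · rcases lt_trichotomy x.val z.val with h2 | h2 | h2
    · exact ⟨y, x, z, h1, h2, by ext w; simp; tauto, axy.symm, ayz, axz⟩
    · omega
    · rcases lt_trichotomy y.val z.val with h3 | h3 | h3
      · exact ⟨y, z, x, h3, h2, by ext w; simp; tauto, ayz, axy.symm, axz.symm⟩
      · omega
      · exact ⟨z, y, x, h3, h1, by ext w; simp; tauto, ayz.symm, axz.symm, axy.symm⟩

lemma mid_eq {n : ℕ} [NeZero n] {a b c : ZMod n} (h1 : a.val < b.val)
    (h2 : b.val < c.val) :
    ((({a, b, c} : Finset (ZMod n)).image ZMod.val).sort (· ≤ ·)).getD 1 0 = b.val := by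
  have himg : (({a, b, c} : Finset (ZMod n)).image ZMod.val) =
      ({a.val, b.val, c.val} : Finset ℕ) := by
    simp [Finset.image_insert]
  rw [himg]
  have hbc : ({b.val, c.val} : Finset ℕ).sort (· ≤ ·) = [b.val, c.val] := by
    rw [show ({b.val, c.val} : Finset ℕ) = insert b.val {c.val} from rfl,
      Finset.sort_insert]
    · simp
    · intro w hw; simp at hw; omega
    · simp; omega
  rw [show ({a.val, b.val, c.val} : Finset ℕ) = insert a.val {b.val, c.val} from rfl,
    Finset.sort_insert]
  · rw [hbc]; rfl
  · intro w hw; simp at hw; rcases hw with h | h <;> omega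
  · simp; omega

/-- A non-crossing graph on `n ≥ 3` points in cyclic order on a circle has at
most `n - 2` triangles. -/
theorem stmt13 (n : ℕ) [NeZero n] (hn : 3 ≤ n) (G : SimpleGraph (ZMod n))
    [DecidableRel G.Adj] (hnc : NonCrossing G) :
    (G.cliqueFinset 3).card ≤ n - 2 := by
  have key := Finset.card_le_card_of_injOn
    (f := fun t : Finset (ZMod n) => ((t.image ZMod.val).sort (· ≤ ·)).getD 1 0)
    (s := G.cliqueFinset 3) (t := Finset.Ioo 0 (n - 1)) ?_ ?_
  · rwa [Nat.card_Ioo, show n - 1 - 0 - 1 = n - 2 by omega] at key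
  · -- maps into Ioo 0 (n-1)
    intro t ht
    obtain ⟨a, b, c, h1, h2, rfl, -, -, -⟩ := triangle_decomp ht
    simp only [mid_eq h1 h2]
    have := c.val_lt
    simp only [Finset.mem_coe, Finset.mem_Ioo]
    omega
  · -- injective
    intro t ht t' ht' hEq
    obtain ⟨a, b, c, h1, h2, rfl, hab, hac, hbc⟩ := triangle_decomp ht
    obtain ⟨a', b', c', h1', h2', rfl, hab', hac', hbc'⟩ := triangle_decomp ht'
    simp only [mid_eq h1 h2, mid_eq h1' h2'] at hEq
    have hb : b = b' := ZMod.val_injective n hEq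
    subst hb
    -- show a = a'
    have ha : a = a' := by
      by_contra hne
      have hval : a.val ≠ a'.val := fun h => hne (ZMod.val_injective n h)
      rcases lt_or_gt_of_ne hval with h | h
      · -- a.val < a'.val : edges (a,b) and (a',c')
        have iff1 := hnc a b a' c' hab hac'
          (fun e => hval (by rw [e])) (by intro e; rw [e] at h1; omega)
          (fun e => by rw [e] at h1'; omega) (fun e => by rw [e] at h2'; omega)
        exact not_sb_of (h.trans h1') (by omega)
          (iff1.mp (sb_of h h1')) |>.elim
      · -- a'.val < a.val : edges (a',b) and (a,c)
        have iff1 := hnc a' b a c hab' hac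
          (fun e => hval (by rw [e])) (by intro e; rw [e] at h1'; omega)
          (fun e => by rw [e] at h1; omega) (fun e => by rw [e] at h2; omega)
        exact not_sb_of (h.trans h1) (by omega)
          (iff1.mp (sb_of h h1)) |>.elim
    subst ha
    -- show c = c'
    have hc : c = c' := by
      by_contra hne
      have hval : c.val ≠ c'.val := fun h => hne (ZMod.val_injective n h)
      rcases lt_or_gt_of_ne hval with h | h
      · -- c.val < c'.val : edges (a,c) and (b,c')
        have iff1 := hnc a c b c' hac hbc'
          (fun e => by rw [e] at h1; omega) (fun e => by rw [e] at h1'; omega)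
          (fun e => by rw [e] at h2; omega) (fun e => hval (by rw [e]))
        exact not_sb_of (h1.trans h2) (by omega)
          (iff1.mp (sb_of h1 h2)) |>.elim
      · -- c'.val < c.val : edges (a,c') and (b,c)
        have iff1 := hnc a c' b c hac' hbc
          (fun e => by rw [e] at h1; omega) (fun e => by rw [e] at h1'; omega)
          (fun e => by rw [e] at h2'; omega) (fun e => hval (by rw [e]))
        exact not_sb_of (h1.trans h2') (by omega)
          (iff1.mp (sb_of h1 h2')) |>.elim
    subst hc
    rfl
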